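/- arXiv:1805.11331 — 3 statements merged into one kernel-verified Lean document; each statement's English description precedes it below -/
import Mathlib

section
/- Let C_* be a chain complex of finite-dimensional vector spaces with boundary d, and D_* a graded subspace. With Inf_n(D) = D_n ∩ d_n^{-1}(D_{n-1}) and Sup_n(D) = D_n + d_{n+1}(D_{n+1}), the inclusion ι : Inf_*(D) → Sup_*(D) is a chain map inducing an isomorphism on homology in every degree. -/
/-- The comparison map from the degree-`n` homology of the infimum chain complex to the
degree-`n` homology of the supremum chain complex, induced by the inclusion
`Inf_* ⊆ Sup_*`.  Locally `C0,C1,C2,C3` are degrees `n-1,n,n+1,n+2`, `d1 = d_n`,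
`d2 = d_{n+1}`, `d3 = d_{n+2}`.  Cycles of `Inf` at degree `n` are `ker d1 ⊓ Inf_n`,
boundaries are `d2(Inf_{n+1})`; similarly for `Sup`. -/
noncomputable def homCompare {𝕜 C0 C1 C2 C3 : Type*} [Field 𝕜]
    [AddCommGroup C0] [Module 𝕜 C0] [FiniteDimensional 𝕜 C0]
    [AddCommGroup C1] [Module 𝕜 C1] [FiniteDimensional 𝕜 C1]
    [AddCommGroup C2] [Module 𝕜 C2] [FiniteDimensional 𝕜 C2]
    [AddCommGroup C3] [Module 𝕜 C3] [FiniteDimensional 𝕜 C3]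
    (d1 : C1 →ₗ[𝕜] C0) (d2 : C2 →ₗ[𝕜] C1) (d3 : C3 →ₗ[𝕜] C2)
    (D0 : Submodule 𝕜 C0) (D1 : Submodule 𝕜 C1)
    (D2 : Submodule 𝕜 C2) (D3 : Submodule 𝕜 C3) :
    ↥(LinearMap.ker d1 ⊓ (D1 ⊓ Submodule.comap d1 D0)) →ₗ[𝕜]
      (↥(LinearMap.ker d1 ⊓ (D1 ⊔ Submodule.map d2 D2)) ⧸
        (Submodule.map d2 (D2 ⊔ Submodule.map d3 D3)).comap
          (LinearMap.ker d1 ⊓ (D1 ⊔ Submodule.map d2 D2)).subtype) :=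
  ((Submodule.map d2 (D2 ⊔ Submodule.map d3 D3)).comap
      (LinearMap.ker d1 ⊓ (D1 ⊔ Submodule.map d2 D2)).subtype).mkQ ∘ₗ
    Submodule.inclusion (inf_le_inf_left _ (inf_le_left.trans le_sup_left))

/-- the inclusion `Inf_*(D) → Sup_*(D)` is a chain map inducing an
isomorphism on homology in every degree: the composite of the inclusion of cycles
with the quotient by boundaries of `Sup` is surjective, with kernel exactly the
boundaries of `Inf`. -/
theorem stmt6 {𝕜 C0 C1 C2 C3 : Type*} [Field 𝕜]
    [AddCommGroup C0] [Module 𝕜 C0] [FiniteDimensional 𝕜 C0]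
    [AddCommGroup C1] [Module 𝕜 C1] [FiniteDimensional 𝕜 C1]
    [AddCommGroup C2] [Module 𝕜 C2] [FiniteDimensional 𝕜 C2]
    [AddCommGroup C3] [Module 𝕜 C3] [FiniteDimensional 𝕜 C3]
    (d1 : C1 →ₗ[𝕜] C0) (d2 : C2 →ₗ[𝕜] C1) (d3 : C3 →ₗ[𝕜] C2)
    (h12 : d1 ∘ₗ d2 = 0) (h23 : d2 ∘ₗ d3 = 0)
    (D0 : Submodule 𝕜 C0) (D1 : Submodule 𝕜 C1)
    (D2 : Submodule 𝕜 C2) (D3 : Submodule 𝕜 C3) :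
    Function.Surjective (homCompare d1 d2 d3 D0 D1 D2 D3) ∧
    LinearMap.ker (homCompare d1 d2 d3 D0 D1 D2 D3)
      = (Submodule.map d2 (D2 ⊓ Submodule.comap d2 D1)).comap
          (LinearMap.ker d1 ⊓ (D1 ⊓ Submodule.comap d1 D0)).subtype := by
  constructor
  · rintro x
    obtain ⟨⟨x, hxk, hxs⟩, rfl⟩ := Submodule.Quotient.mk_surjective _ x
    obtain ⟨u, hu, v, hv, huv⟩ := Submodule.mem_sup.mp hxs
    obtain ⟨w, hw, rfl⟩ := hv
    have hd2w : d1 (d2 w) = 0 := by simpa using LinearMap.congr_fun h12 w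
    have hd1u : d1 u = 0 := by
      have : d1 x = 0 := hxk
      rw [← huv, map_add, hd2w, add_zero] at this
      exact this
    refine ⟨⟨u, hd1u, hu, by simp [Submodule.mem_comap, hd1u]⟩, ?_⟩
    rw [homCompare, LinearMap.comp_apply, Submodule.mkQ_apply, Submodule.Quotient.eq]
    refine Submodule.mem_comap.mpr ?_
    refine ⟨-w, Submodule.neg_mem _ (Submodule.mem_sup_left hw), ?_⟩
    show d2 (-w) = u - x
    rw [map_neg, ← huv]
    abel
  · ext ⟨x, hxk, hxD1, hxD0⟩
    simp only [LinearMap.mem_ker, homCompare, LinearMap.comp_apply,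
      Submodule.mkQ_apply, Submodule.Quotient.mk_eq_zero,
      Submodule.mem_comap, Submodule.coe_subtype, Submodule.coe_inclusion]
    constructor
    · rintro ⟨w, hw, hwx⟩
      obtain ⟨a, ha, b, hb, rfl⟩ := Submodule.mem_sup.mp hw
      obtain ⟨c, hc, rfl⟩ := hb
      have h3 : d2 (d3 c) = 0 := by simpa using LinearMap.congr_fun h23 c
      have hda : d2 a = x := by
        rw [← hwx, map_add, h3, add_zero]
      exact ⟨a, ⟨ha, show d2 a ∈ D1 by rw [hda]; exact hxD1⟩, hda⟩
    · rintro ⟨a, ⟨ha, _⟩, hax⟩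
      exact ⟨a, Submodule.mem_sup_left ha, hax⟩
end

section
/- Let C_* be a chain complex of finite-dimensional inner product spaces with boundary d and D_* a graded subspace, Inf_n = D_n ∩ d_n^{-1}(D_{n-1}). Let L_n^{Inf,up} = (d_n|_{Inf})*(d_n|_{Inf}) and let L_n^{up} = d_n* d_n be the full up-Laplacian. If v ∈ Inf_n satisfies L_n^{up} v = λ v for some scalar λ, then λ is an eigenvalue of L_n^{Inf,up} with eigenvector v; in particular every quasi-eigenvalue of L_n^{up} restricted to Inf_n is an eigenvalue of L_n^{Inf,up}. -/
section InfLaplacian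

variable {𝕜 Cm C0 C1 : Type*} [RCLike 𝕜]
  [NormedAddCommGroup Cm] [InnerProductSpace 𝕜 Cm] [FiniteDimensional 𝕜 Cm]
  [NormedAddCommGroup C0] [InnerProductSpace 𝕜 C0] [FiniteDimensional 𝕜 C0]
  [NormedAddCommGroup C1] [InnerProductSpace 𝕜 C1] [FiniteDimensional 𝕜 C1]

/-- The boundary maps the infimum space `Inf_n = D_n ∩ d_n⁻¹(D_{n-1})` into
`Inf_{n-1} = D_{n-1} ∩ d_{n-1}⁻¹(D_{n-2})`. -/
theorem inf_closed (d0 : C0 →ₗ[𝕜] Cm) (d1 : C1 →ₗ[𝕜] C0) (hdd : d0 ∘ₗ d1 = 0)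
    (Dm : Submodule 𝕜 Cm) (D0 : Submodule 𝕜 C0) (D1 : Submodule 𝕜 C1) :
    ∀ x ∈ D1 ⊓ Submodule.comap d1 D0, d1 x ∈ D0 ⊓ Submodule.comap d0 Dm := by
  intro x hx
  rcases Submodule.mem_inf.mp hx with ⟨_, h2⟩
  refine Submodule.mem_inf.mpr ⟨Submodule.mem_comap.mp h2, Submodule.mem_comap.mpr ?_⟩
  have hz : d0 (d1 x) = 0 := by simpa using LinearMap.congr_fun hdd x
  rw [hz]
  exact Dm.zero_mem

/-- The restriction `d_n|_{Inf} : Inf_n → Inf_{n-1}` of the boundary map to the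
infimum chain complex. -/
noncomputable def dInf (d0 : C0 →ₗ[𝕜] Cm) (d1 : C1 →ₗ[𝕜] C0) (hdd : d0 ∘ₗ d1 = 0)
    (Dm : Submodule 𝕜 Cm) (D0 : Submodule 𝕜 C0) (D1 : Submodule 𝕜 C1) :
    ↥(D1 ⊓ Submodule.comap d1 D0) →ₗ[𝕜] ↥(D0 ⊓ Submodule.comap d0 Dm) :=
  d1.restrict (inf_closed d0 d1 hdd Dm D0 D1)

end InfLaplacian

open scoped InnerProductSpace in
/-- if `v ∈ Inf_n` satisfies `L_n^{up} v = λ v` for the full up-Laplacian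
`L_n^{up} = d_n* d_n`, then `v`, viewed in `Inf_n`, is a `λ`-eigenvector of the
infimum up-Laplacian `L_n^{Inf,up} = (d_n|_{Inf})* (d_n|_{Inf})`.
Locally `Cm,C0,C1` are degrees `n-2,n-1,n`, `d0 = d_{n-1}`, `d1 = d_n`. -/
theorem stmt15 {𝕜 Cm C0 C1 : Type*} [RCLike 𝕜]
    [NormedAddCommGroup Cm] [InnerProductSpace 𝕜 Cm] [FiniteDimensional 𝕜 Cm]
    [NormedAddCommGroup C0] [InnerProductSpace 𝕜 C0] [FiniteDimensional 𝕜 C0]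
    [NormedAddCommGroup C1] [InnerProductSpace 𝕜 C1] [FiniteDimensional 𝕜 C1]
    (d0 : C0 →ₗ[𝕜] Cm) (d1 : C1 →ₗ[𝕜] C0) (hdd : d0 ∘ₗ d1 = 0)
    (Dm : Submodule 𝕜 Cm) (D0 : Submodule 𝕜 C0) (D1 : Submodule 𝕜 C1)
    (lam : 𝕜) (v : C1) (hv : v ∈ D1 ⊓ Submodule.comap d1 D0)
    (heig : LinearMap.adjoint d1 (d1 v) = lam • v) :
    (LinearMap.adjoint (dInf d0 d1 hdd Dm D0 D1) ∘ₗ dInf d0 d1 hdd Dm D0 D1)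
        ⟨v, hv⟩ = lam • (⟨v, hv⟩ : ↥(D1 ⊓ Submodule.comap d1 D0)) := by
  apply ext_inner_left 𝕜
  intro w
  rw [LinearMap.comp_apply, LinearMap.adjoint_inner_right]
  have h1 : ⟪dInf d0 d1 hdd Dm D0 D1 w, dInf d0 d1 hdd Dm D0 D1 ⟨v, hv⟩⟫_𝕜
      = ⟪d1 (w : C1), d1 v⟫_𝕜 := rfl
  have h2 : ⟪w, lam • (⟨v, hv⟩ : ↥(D1 ⊓ Submodule.comap d1 D0))⟫_𝕜
      = ⟪(w : C1), lam • v⟫_𝕜 := rfl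
  rw [h1, h2, ← heig, LinearMap.adjoint_inner_right]
end

section
/- Let K be a finite abstract simplicial complex and φ a weight on K, i.e., a bilinear map φ : F(K) × F(K) → F satisfying φ(d_iσ, d_j d_iσ) φ(σ, d_iσ) = φ(d_jσ, d_j d_iσ) φ(σ, d_jσ) for all simplices σ and all j < i. Define ∂_n^φ(σ) = Σ_{i=0}^n (−1)^i φ(σ, d_iσ) d_iσ on the free vector space on n-simplices. Then ∂_{n-1}^φ ∘ ∂_n^φ = 0. -/
/-- The `φ`-weighted simplicial boundary operator on the free vector space on the
finite subsets of a linearly ordered vertex type `V`: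
`∂^φ σ = Σ_{v ∈ σ} (−1)^{idx σ v} φ(σ, σ \ v) (σ \ v)`,
where `idx σ v` is the position of `v` among the vertices of `σ` (so `σ \ v = d_i σ`),
and the boundary of a `0`-simplex is `0`. -/
noncomputable def wbd (𝕜 : Type*) [RCLike 𝕜] {V : Type*} [LinearOrder V]
    (phi : Finset V → Finset V → 𝕜) :
    (Finset V →₀ 𝕜) →ₗ[𝕜] (Finset V →₀ 𝕜) :=
  Finsupp.lsum 𝕜 fun σ => LinearMap.toSpanSingleton 𝕜 _
    (if 2 ≤ σ.card then
        σ.sum fun v =>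
          ((-1 : 𝕜) ^ (σ.filter (· < v)).card * phi σ (σ.erase v)) •
            Finsupp.single (σ.erase v) (1 : 𝕜)
      else 0)

lemma wbd_single {𝕜 : Type*} [RCLike 𝕜] {V : Type*} [LinearOrder V]
    (phi : Finset V → Finset V → 𝕜) (τ : Finset V) :
    wbd 𝕜 phi (Finsupp.single τ (1 : 𝕜)) =
      (if 2 ≤ τ.card then
        τ.sum fun v =>
          ((-1 : 𝕜) ^ (τ.filter (· < v)).card * phi τ (τ.erase v)) •
            Finsupp.single (τ.erase v) (1 : 𝕜)
      else 0) := by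
  simp [wbd]

-- index of u in σ.erase v when u < v
lemma idx_erase_lt {V : Type*} [LinearOrder V] (σ : Finset V) {u v : V} (huv : u < v) :
    ((σ.erase v).filter (· < u)).card = (σ.filter (· < u)).card := by
  rw [Finset.filter_erase, Finset.erase_eq_of_notMem]
  simp only [Finset.mem_filter, not_and]
  intro _ h; exact absurd (h.trans huv) (lt_irrefl v)

lemma idx_erase_gt {V : Type*} [LinearOrder V] (σ : Finset V) {u v : V} (hu : u ∈ σ)
    (huv : u < v) :
    ((σ.erase u).filter (· < v)).card + 1 = (σ.filter (· < v)).card := by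
  rw [Finset.filter_erase, Finset.card_erase_of_mem (by simp [hu, huv])]
  have : 1 ≤ (σ.filter (· < v)).card :=
    Finset.card_pos.mpr ⟨u, by simp [hu, huv]⟩
  omega

/-- for a weight `φ` on a finite simplicial complex `K` (i.e. satisfying
`φ(d_iσ, d_j d_iσ) φ(σ, d_iσ) = φ(d_jσ, d_j d_iσ) φ(σ, d_jσ)` for all `σ ∈ K`, `j < i`),
the weighted boundary satisfies `∂^φ ∘ ∂^φ = 0` on the chains of `K`. -/
theorem stmt16 {𝕜 V : Type*} [RCLike 𝕜] [LinearOrder V]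
    (K : Set (Finset V)) (hfin : K.Finite)
    (hne : ∀ s ∈ K, s.Nonempty)
    (hdown : ∀ s ∈ K, ∀ t ⊆ s, t.Nonempty → t ∈ K)
    (phi : Finset V → Finset V → 𝕜)
    (hphi : ∀ σ ∈ K, ∀ u ∈ σ, ∀ v ∈ σ, u < v →
      phi (σ.erase v) ((σ.erase v).erase u) * phi σ (σ.erase v)
        = phi (σ.erase u) ((σ.erase u).erase v) * phi σ (σ.erase u)) :
    ∀ σ ∈ K, wbd 𝕜 phi (wbd 𝕜 phi (Finsupp.single σ 1)) = 0 := by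
  intro σ hσ
  by_cases h2 : 2 ≤ σ.card
  swap
  · rw [wbd_single, if_neg h2, map_zero]
  rw [wbd_single, if_pos h2, map_sum]
  by_cases h3 : 3 ≤ σ.card
  swap
  · -- card σ = 2 : every erase has card 1
    apply Finset.sum_eq_zero
    intro v hv
    rw [map_smul, wbd_single, if_neg, smul_zero]
    rw [Finset.card_erase_of_mem hv]; omega
  -- main case
  have herase2 : ∀ v ∈ σ, 2 ≤ (σ.erase v).card := by
    intro v hv; rw [Finset.card_erase_of_mem hv]; omega
  have step : ∀ v ∈ σ,
      wbd 𝕜 phi (((-1 : 𝕜) ^ (σ.filter (· < v)).card * phi σ (σ.erase v)) •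
          Finsupp.single (σ.erase v) (1 : 𝕜)) =
        (σ.erase v).sum fun u =>
          (((-1 : 𝕜) ^ (σ.filter (· < v)).card * phi σ (σ.erase v)) *
            ((-1 : 𝕜) ^ ((σ.erase v).filter (· < u)).card *
              phi (σ.erase v) ((σ.erase v).erase u))) •
            Finsupp.single ((σ.erase v).erase u) (1 : 𝕜) := by
    intro v hv
    rw [map_smul, wbd_single, if_pos (herase2 v hv), Finset.smul_sum]
    exact Finset.sum_congr rfl fun u _ => by rw [smul_smul]
  rw [Finset.sum_congr rfl step]
  -- turn into a sum over the sigma type and use the swap involution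
  set F : (_ : V) × V → (Finset V →₀ 𝕜) := fun p =>
    (((-1 : 𝕜) ^ (σ.filter (· < p.1)).card * phi σ (σ.erase p.1)) *
      ((-1 : 𝕜) ^ ((σ.erase p.1).filter (· < p.2)).card *
        phi (σ.erase p.1) ((σ.erase p.1).erase p.2))) •
      Finsupp.single ((σ.erase p.1).erase p.2) (1 : 𝕜) with hF
  rw [Finset.sum_sigma' σ (fun v => σ.erase v)
    (fun v u => F ⟨v, u⟩)]
  -- pairwise cancellation lemma
  have key : ∀ u ∈ σ, ∀ v ∈ σ, u < v → F ⟨v, u⟩ + F ⟨u, v⟩ = 0 := by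
    intro u hu v hv huv
    rw [hF]
    simp only
    rw [Finset.erase_right_comm (a := u) (b := v)]
    rw [← add_smul]
    convert zero_smul 𝕜 _
    rw [idx_erase_lt σ huv, ← idx_erase_gt σ hu huv, pow_succ]
    have hphi' := hphi σ hσ u hu v hv huv
    rw [Finset.erase_right_comm (a := u) (b := v)] at hphi'
    linear_combination (-((-1:𝕜) ^ (Finset.filter (fun x => x < u) σ).card *
      (-1:𝕜) ^ (Finset.filter (fun x => x < v) (σ.erase u)).card)) * hphi'
  apply Finset.sum_involution (fun p _ => (⟨p.2, p.1⟩ : (_ : V) × V))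
  · intro p hp
    simp only [Finset.mem_sigma] at hp
    obtain ⟨h1, h2⟩ := hp
    have hne' : p.2 ≠ p.1 := Finset.ne_of_mem_erase h2
    rcases lt_or_gt_of_ne hne' with h | h
    · exact key p.2 (Finset.mem_of_mem_erase h2) p.1 h1 h
    · rw [add_comm]; exact key p.1 h1 p.2 (Finset.mem_of_mem_erase h2) h
  · intro p hp _
    simp only [Finset.mem_sigma] at hp
    intro hc
    exact Finset.ne_of_mem_erase hp.2 (congrArg Sigma.fst hc)
  · intro p hp
    simp only [Finset.mem_sigma] at hp ⊢
    exact ⟨Finset.mem_of_mem_erase hp.2,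
      Finset.mem_erase.mpr ⟨(Finset.ne_of_mem_erase hp.2).symm, hp.1⟩⟩
  · intro p hp; rfl
end
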